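/- Let G be a connected simple graph of order n ≥ 10 with σ₂(G) ≥ n − 2, and let u, v ∈ V(G) with dist(u,v) = diam(G) ≥ 3. Then N(u) ∪ N(v) = V(G) \ {u, v}, deg(u) + deg(v) = n − 2, and diam(G) = 3. -/

import Mathlib

lemma aux_step {V : Type*} (G : SimpleGraph V) (hconn : G.Connected) (u v : V)
    (h : 0 < G.dist u v) : ∃ w, G.Adj u w ∧ G.dist w v = G.dist u v - 1 := by
  obtain ⟨p, hp⟩ := hconn.exists_walk_length_eq_dist u v
  cases p with
  | nil => simp at hp; simp [SimpleGraph.dist_self] at h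
  | cons h' q =>
    rename_i w
    refine ⟨w, h', le_antisymm ?_ ?_⟩
    · have := G.dist_le q
      simp [SimpleGraph.Walk.length_cons] at hp
      omega
    · obtain ⟨r, hr⟩ := hconn.exists_walk_length_eq_dist w v
      have := G.dist_le (SimpleGraph.Walk.cons h' r)
      simp [SimpleGraph.Walk.length_cons, hr] at this
      omega

theorem stmt_10 {V : Type*} [Fintype V] (G : SimpleGraph V)
    (hconn : G.Connected) (hn : 10 ≤ Fintype.card V)
    (hsigma : ∀ x y : V, x ≠ y → ¬ G.Adj x y →
      Fintype.card V - 2 ≤ (G.neighborSet x).ncard + (G.neighborSet y).ncard)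
    (u v : V) (hdist : G.dist u v = G.diam) (hdiam : 3 ≤ G.diam) :
    G.neighborSet u ∪ G.neighborSet v = Set.univ \ {u, v} ∧
    (G.neighborSet u).ncard + (G.neighborSet v).ncard = Fintype.card V - 2 ∧
    G.diam = 3 := by
  have hd3 : 3 ≤ G.dist u v := hdist ▸ hdiam
  have hne : u ≠ v := by
    rintro rfl; simp [SimpleGraph.dist_self] at hd3
  have hnadj : ¬ G.Adj u v := by
    intro h
    have : G.dist u v = 1 := SimpleGraph.dist_eq_one_iff_adj.mpr h
    omega
  -- disjointness
  have hdisj : Disjoint (G.neighborSet u) (G.neighborSet v) := by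
    rw [Set.disjoint_left]
    intro w hwu hwv
    have h2 : G.dist u v ≤ 2 := by
      have := G.dist_le (SimpleGraph.Walk.cons hwu
        (SimpleGraph.Walk.cons (G.adj_symm hwv) SimpleGraph.Walk.nil))
      exact this
    omega
  have hsub : G.neighborSet u ∪ G.neighborSet v ⊆ Set.univ \ {u, v} := by
    rintro w (hw | hw)
    · refine ⟨trivial, ?_⟩
      simp only [Set.mem_insert_iff, Set.mem_singleton_iff]
      push_neg
      exact ⟨fun h => G.irrefl (h ▸ hw), fun h => hnadj (h ▸ hw)⟩
    · refine ⟨trivial, ?_⟩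
      simp only [Set.mem_insert_iff, Set.mem_singleton_iff]
      push_neg
      refine ⟨fun h => hnadj ?_, fun h => G.irrefl (h ▸ hw)⟩
      rw [h] at hw; exact G.adj_symm hw
  have hcard_target : (Set.univ \ ({u, v} : Set V)).ncard = Fintype.card V - 2 := by
    rw [Set.ncard_diff (Set.subset_univ _), Set.ncard_univ, Set.ncard_pair hne, Nat.card_eq_fintype_card]
  have hunion_card : (G.neighborSet u ∪ G.neighborSet v).ncard
      = (G.neighborSet u).ncard + (G.neighborSet v).ncard :=
    Set.ncard_union_eq hdisj (Set.toFinite _) (Set.toFinite _)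
  have hge : Fintype.card V - 2 ≤ (G.neighborSet u ∪ G.neighborSet v).ncard := by
    rw [hunion_card]; exact hsigma u v hne hnadj
  have heq : G.neighborSet u ∪ G.neighborSet v = Set.univ \ {u, v} :=
    Set.eq_of_subset_of_ncard_le hsub (by omega) (Set.toFinite _)
  have hsum : (G.neighborSet u).ncard + (G.neighborSet v).ncard = Fintype.card V - 2 := by
    rw [← hunion_card, heq, hcard_target]
  refine ⟨heq, hsum, ?_⟩
  -- diam = 3
  obtain ⟨w, hw_adj, hw_dist⟩ := aux_step G hconn u v (by omega)
  obtain ⟨x, hx_adj, hx_dist⟩ := aux_step G hconn w v (by omega)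
  rw [hw_dist] at hx_dist
  have hxv : x ≠ v := by
    intro h; rw [h, SimpleGraph.dist_self] at hx_dist; omega
  have hxu : x ≠ u := by
    intro h; rw [h] at hx_dist; omega
  have hnadjux : ¬ G.Adj u x := by
    intro h
    have := G.dist_le (SimpleGraph.Walk.cons (G.adj_symm h)
      ((hconn.exists_walk_length_eq_dist u v).choose))
    have hlen := (hconn.exists_walk_length_eq_dist u v).choose_spec
    -- use triangle instead: dist x v ≥ dist u v - 1
    have htri := hconn.dist_triangle (u := u) (v := x) (w := v)
    have h1 : G.dist u x = 1 := SimpleGraph.dist_eq_one_iff_adj.mpr h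
    omega
  have hxmem : x ∈ G.neighborSet u ∪ G.neighborSet v := by
    rw [heq]
    exact ⟨trivial, by simp [hxu, hxv]⟩
  have : G.Adj v x := by
    rcases hxmem with h | h
    · exact absurd h hnadjux
    · exact h
  have : G.dist x v = 1 := SimpleGraph.dist_eq_one_iff_adj.mpr (G.adj_symm this)
  have : G.dist u v = 3 := by omega
  omega
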